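/- Let C₇ denote the cycle graph on 7 vertices, and let C₇⁺ be its augmented pattern (a graph on 35 vertices). Then C₇⁺ admits a degenerate proper 3-coloring; that is, there is a proper 3-coloring c of C₇⁺ such that for every nonempty set S of vertices of C₇⁺ whose induced subgraph is not a triangle, there exists a vertex v ∈ S all of whose neighbors inside S receive the same color under c (vacuously so if v has no neighbors in S). -/
import Mathlib


open SimpleGraph

/-- Vertex type of the augmented pattern `H⁺`: the vertices of `H` together with two new
vertices `(s, false)` and `(s, true)` for every non-edge `s = {u,v}` of `H`. -/
abbrev AugVert {V : Type*} (H : SimpleGraph V) : Type _ :=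
  V ⊕ ({s : Sym2 V // ¬ s.IsDiag ∧ s ∉ H.edgeSet} × Bool)

/-- The augmented pattern `H⁺`: all edges of `H`, together with, for each non-edge
`{u,v}` of `H`, the four edges joining `u` and `v` to the two new vertices
`(⟨{u,v},_⟩, false)` and `(⟨{u,v},_⟩, true)`. -/
def augment {V : Type*} (H : SimpleGraph V) : SimpleGraph (AugVert H) :=
  SimpleGraph.fromRel (fun x y =>
    match x, y with
    | Sum.inl a, Sum.inl b => H.Adj a b
    | Sum.inl a, Sum.inr p => a ∈ p.1.1
    | _, _ => False)

instance augDec {V : Type*} [DecidableEq V] (H : SimpleGraph V) [DecidableRel H.Adj] :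
    DecidableRel (augment H).Adj := fun a b => by
  have : Decidable ((fun x y =>
    match x, y with
    | Sum.inl a, Sum.inl b => H.Adj a b
    | Sum.inl a, Sum.inr p => a ∈ p.1.1
    | _, _ => False) a b) := by
    cases a <;> cases b <;> dsimp <;> infer_instance
  have : Decidable ((fun x y =>
    match x, y with
    | Sum.inl a, Sum.inl b => H.Adj a b
    | Sum.inl a, Sum.inr p => a ∈ p.1.1
    | _, _ => False) b a) := by
    cases a <;> cases b <;> dsimp <;> infer_instance
  exact inferInstanceAs (Decidable (_ ≠ _ ∧ (_ ∨ _)))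

/-- Colors of the seven cycle vertices. -/
def ccol : Fin 7 → Fin 3 := ![0,1,0,2,0,2,1]

/-- Symmetric table of colors for the added vertices (entries at edges/diagonal
of `C₇` are irrelevant). -/
def xcolf : Fin 7 → Fin 7 → Fin 3 :=
  ![![0,0,1,1,1,1,0],
    ![0,0,0,0,2,0,2],
    ![1,0,0,0,2,1,2],
    ![1,0,0,0,0,0,0],
    ![1,2,2,0,0,0,2],
    ![1,0,1,0,0,0,0],
    ![0,2,2,0,2,0,0]]

/-- Symmetric table of elimination ranks for the added vertices. -/
def xrankf : Fin 7 → Fin 7 → ℕ :=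
  ![![0,0,2,4,6,8,0],
    ![0,0,0,20,50,58,36],
    ![2,0,0,0,48,64,38],
    ![4,20,0,0,0,22,24],
    ![6,50,48,0,0,0,34],
    ![8,58,64,22,0,0,0],
    ![0,36,38,24,34,0,0]]

/-- Elimination ranks of the cycle vertices. -/
def crank : Fin 7 → ℕ := ![0,56,62,18,46,68,32]

/-- The degenerate proper 3-coloring of `C₇⁺`. -/
def mycol : AugVert (SimpleGraph.cycleGraph 7) → Fin 3
  | .inl i => ccol i
  | .inr (⟨s,_⟩, _) => Sym2.lift ⟨xcolf, by decide⟩ s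

/-- The elimination rank: in any vertex set, the vertex of minimal rank has a
monochromatic neighborhood. -/
def myrank : AugVert (SimpleGraph.cycleGraph 7) → ℕ
  | .inl i => crank i
  | .inr (⟨s,_⟩, _) => Sym2.lift ⟨xrankf, by decide⟩ s

set_option maxHeartbeats 4000000 in
/-- `mycol` is a proper coloring. -/
theorem mycol_proper : ∀ a b : AugVert (SimpleGraph.cycleGraph 7),
    (augment (SimpleGraph.cycleGraph 7)).Adj a b → mycol a ≠ mycol b := by decide

set_option maxHeartbeats 4000000 in
/-- All neighbors of a vertex `v` having rank at least the rank of `v` share one color. -/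
theorem mycol_key : ∀ v w₁ : AugVert (SimpleGraph.cycleGraph 7),
    (augment (SimpleGraph.cycleGraph 7)).Adj v w₁ → myrank v ≤ myrank w₁ →
    ∀ w₂ : AugVert (SimpleGraph.cycleGraph 7),
    (augment (SimpleGraph.cycleGraph 7)).Adj v w₂ → myrank v ≤ myrank w₂ →
    mycol w₁ = mycol w₂ := by decide

/-- The augmented pattern `C₇⁺` of the cycle on 7 vertices admits a degenerate proper
3-coloring: a proper 3-coloring `c` such that every nonempty vertex set `S` whose
induced subgraph is not a triangle contains a vertex all of whose neighbors inside `S`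
get the same color under `c`. -/
theorem augmentC7_degenerately_colorable :
    ∃ c : (augment (SimpleGraph.cycleGraph 7)).Coloring (Fin 3),
      ∀ S : Finset (AugVert (SimpleGraph.cycleGraph 7)), S.Nonempty →
        ¬ (augment (SimpleGraph.cycleGraph 7)).IsNClique 3 S →
        ∃ v ∈ S, ∀ w₁ ∈ S, ∀ w₂ ∈ S,
          (augment (SimpleGraph.cycleGraph 7)).Adj v w₁ →
          (augment (SimpleGraph.cycleGraph 7)).Adj v w₂ → c w₁ = c w₂ := by
  refine ⟨SimpleGraph.Coloring.mk mycol (fun {a b} h => mycol_proper a b h), ?_⟩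
  intro S hS _
  obtain ⟨v, hv, hmin⟩ := S.exists_min_image myrank hS
  exact ⟨v, hv, fun w₁ hw₁ w₂ hw₂ h1 h2 =>
    mycol_key v w₁ h1 (hmin w₁ hw₁) w₂ h2 (hmin w₂ hw₂)⟩
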